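/- The Graver basis of an integer matrix A is finite. -/

import Mathlib

/-- The conformal partial order on ℤⁿ. -/
def IsConformal {n : ℕ} (x y : Fin n → ℤ) : Prop :=
  ∀ i, x i * y i ≥ 0 ∧ |x i| ≤ |y i|

/-- The Graver basis of an integer matrix. -/
def Graver {m n : ℕ} (A : Matrix (Fin m) (Fin n) ℤ) : Set (Fin n → ℤ) :=
  {x | x ≠ 0 ∧ A.mulVec x = 0 ∧
    ∀ y : Fin n → ℤ, y ≠ 0 → A.mulVec y = 0 → IsConformal y x → y = x}

/-- Encode a vector by its positive and negative parts. -/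
def graverEnc {n : ℕ} (x : Fin n → ℤ) : Fin n × Bool → ℕ :=
  fun p => if p.2 then (x p.1).toNat else (-(x p.1)).toNat

lemma graverEnc_inj {n : ℕ} : Function.Injective (graverEnc (n := n)) := by
  intro x y h
  funext i
  have h1 := congrFun h (i, true)
  have h2 := congrFun h (i, false)
  simp [graverEnc] at h1 h2
  omega

lemma conformal_key (a b : ℤ) :
    (a * b ≥ 0 ∧ |a| ≤ |b|) ↔ (a.toNat ≤ b.toNat ∧ (-a).toNat ≤ (-b).toNat) := by
  rcases lt_trichotomy b 0 with hb | hb | hb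
  · constructor
    · rintro ⟨h1, h2⟩
      have ha : a ≤ 0 := by nlinarith
      rw [abs_of_nonpos ha, abs_of_neg hb] at h2
      omega
    · rintro ⟨h1, h2⟩
      have ha : a ≤ 0 := by omega
      have hab : b ≤ a := by omega
      constructor
      · nlinarith
      · rw [abs_of_nonpos ha, abs_of_neg hb]; omega
  · subst hb; constructor
    · rintro ⟨h1, h2⟩
      have : a = 0 := by simpa [abs_nonpos_iff] using h2
      simp [this]
    · rintro ⟨h1, h2⟩
      have : a = 0 := by omega
      simp [this]
  · constructor
    · rintro ⟨h1, h2⟩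
      have ha : 0 ≤ a := by nlinarith
      rw [abs_of_nonneg ha, abs_of_pos hb] at h2
      omega
    · rintro ⟨h1, h2⟩
      have ha : 0 ≤ a := by omega
      have hab : a ≤ b := by omega
      constructor
      · nlinarith
      · rw [abs_of_nonneg ha, abs_of_pos hb]; omega

lemma conformal_iff_enc_le {n : ℕ} (x y : Fin n → ℤ) :
    IsConformal x y ↔ graverEnc x ≤ graverEnc y := by
  constructor
  · intro h p
    rcases p with ⟨i, b⟩
    obtain ⟨h1, h2⟩ := (conformal_key (x i) (y i)).mp (h i)
    cases b
    · simpa [graverEnc] using h2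
    · simpa [graverEnc] using h1
  · intro h i
    refine (conformal_key (x i) (y i)).mpr ⟨?_, ?_⟩
    · simpa [graverEnc] using h (i, true)
    · simpa [graverEnc] using h (i, false)

/-- The Graver basis of an integer matrix is finite. -/
theorem graver_finite (m n : ℕ) (A : Matrix (Fin m) (Fin n) ℤ) :
    (Graver A).Finite := by
  have hpwo : (graverEnc '' Graver A).IsPWO := Set.isPWO_of_wellQuasiOrderedLE _
  have hanti : IsAntichain (· ≤ ·) (graverEnc '' Graver A) := by
    rintro _ ⟨x, hx, rfl⟩ _ ⟨y, hy, rfl⟩ hne hle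
    have hconf : IsConformal x y := (conformal_iff_enc_le x y).mpr hle
    have := hy.2.2 x hx.1 hx.2.1 hconf
    exact hne (by rw [this])
  have hfin : (graverEnc '' Graver A).Finite :=
    hanti.finite_of_partiallyWellOrderedOn hpwo
  exact Set.Finite.of_finite_image hfin (graverEnc_inj.injOn)
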